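/- arXiv:1410.6820 — 2 statements merged into one kernel-verified Lean document; each statement's English description precedes it below -/
import Mathlib

section
/- Existence of pure states with all one-body marginals non-degenerate: Let n ≥ 1 and let d : Fin (n+1) → ℕ be monotone with 1 ≤ d i for all i. Then the following are equivalent: (i) there exists a unit vector ψ : ((i : Fin (n+1)) → Fin (d i)) → ℂ such that for every i : Fin (n+1) the one-body reduced density matrix ρ_i of |ψ⟩⟨ψ| (the partial trace over all factors other than the i-th) has pairwise distinct eigenvalues, i.e. the map ρ_i.isHermitian.eigenvalues : Fin (d i) → ℝ is injective; (ii) d (Fin.last n) ≤ (∏ k : Fin n, d k.castSucc) + 1. -/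
open scoped BigOperators
open ComplexOrder

/-- The rank-one projection `|ψ⟩⟨ψ|`. -/
def outer {m : Type*} (ψ : m → ℂ) : Matrix m m ℂ :=
  Matrix.of fun u v => ψ u * (starRingEnd ℂ) (ψ v)

/-- The one-body reduced density matrix at site `k`. -/
noncomputable def red1 {n : ℕ} {d : Fin n → ℕ}
    (ρ : Matrix ((i : Fin n) → Fin (d i)) ((i : Fin n) → Fin (d i)) ℂ) (k : Fin n) :
    Matrix (Fin (d k)) (Fin (d k)) ℂ :=
  Matrix.of fun s t => ∑ x : (i : Fin n) → Fin (d i),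
    if x k = s then ρ x (Function.update x k t) else 0

open Polynomial in
lemma aux_charpoly_diagonal {R : Type*} [CommRing R] {d : ℕ} (v : Fin d → R) :
    (Matrix.diagonal v).charpoly = ∏ i, (X - C (v i)) := by
  unfold Matrix.charpoly
  have h : Matrix.charmatrix (Matrix.diagonal v)
      = Matrix.diagonal (fun i => (X : R[X]) - C (v i)) := by
    ext i j
    by_cases h : i = j
    · subst h; simp [Matrix.charmatrix_apply_eq]
    · simp [Matrix.charmatrix_apply_ne _ _ _ h, Matrix.diagonal_apply_ne _ h]
  rw [h, Matrix.det_diagonal]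

open Polynomial in
lemma aux_charpoly_conj {d : ℕ} (U : Matrix.unitaryGroup (Fin d) ℂ)
    (D : Matrix (Fin d) (Fin d) ℂ) :
    ((U : Matrix (Fin d) (Fin d) ℂ) * D * star (U : Matrix (Fin d) (Fin d) ℂ)).charpoly
      = D.charpoly := by
  have hUV : (U : Matrix (Fin d) (Fin d) ℂ) * star (U : Matrix (Fin d) (Fin d) ℂ) = 1 :=
    Matrix.mem_unitaryGroup_iff.mp U.2
  have hVU : star (U : Matrix (Fin d) (Fin d) ℂ) * (U : Matrix (Fin d) (Fin d) ℂ) = 1 :=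
    Matrix.mem_unitaryGroup_iff'.mp U.2
  set Um := (C : ℂ →+* ℂ[X]).mapMatrix (U : Matrix (Fin d) (Fin d) ℂ) with hUm
  set Vm := (C : ℂ →+* ℂ[X]).mapMatrix (star (U : Matrix (Fin d) (Fin d) ℂ)) with hVm
  have hUVm : Um * Vm = 1 := by
    rw [hUm, hVm, ← RingHom.map_mul, hUV]; simp
  have hVUm : Vm * Um = 1 := by
    rw [hUm, hVm, ← RingHom.map_mul, hVU]; simp
  have key : Matrix.charmatrix ((U : Matrix (Fin d) (Fin d) ℂ) * D * star (U : Matrix (Fin d) (Fin d) ℂ))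
      = Um * Matrix.charmatrix D * Vm := by
    unfold Matrix.charmatrix
    rw [mul_sub, sub_mul]
    congr 1
    · rw [mul_assoc, (Matrix.scalar_commute (X : ℂ[X]) (fun r' => Commute.all _ _) Vm).eq, ← mul_assoc, hUVm, one_mul]
    · simp only [RingHom.map_mul, hUm, hVm]
  unfold Matrix.charpoly
  rw [key, Matrix.det_mul, Matrix.det_mul, mul_comm, ← mul_assoc, ← Matrix.det_mul, hVUm]
  simp

open Polynomial in
lemma aux_eig_diag {d : ℕ} (μ : Fin d → ℝ) (hμ : Function.Injective μ)
    {A : Matrix (Fin d) (Fin d) ℂ} (hA : A = Matrix.diagonal (fun i => (μ i : ℂ)))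
    (h : A.IsHermitian) : Function.Injective h.eigenvalues := by
  classical
  -- charpoly two ways
  have h1 : A.charpoly = ∏ i, (X - C ((μ i : ℂ))) := by rw [hA, aux_charpoly_diagonal]
  have h2 : A.charpoly = ∏ i, (X - C ((h.eigenvalues i : ℂ))) := by
    conv_lhs => rw [h.spectral_theorem]
    simp only [Unitary.conjStarAlgAut_apply, Unitary.coe_star]
    rw [aux_charpoly_conj, aux_charpoly_diagonal]
    rfl
  -- multiset of roots
  have key : (Finset.univ.val.map (fun i => ((μ i : ℂ))))
      = Finset.univ.val.map (fun i => ((h.eigenvalues i : ℂ))) := by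
    have r1 := Polynomial.roots_multiset_prod_X_sub_C
      (Finset.univ.val.map (fun i => ((μ i : ℂ))))
    have r2 := Polynomial.roots_multiset_prod_X_sub_C
      (Finset.univ.val.map (fun i => ((h.eigenvalues i : ℂ))))
    rw [Multiset.map_map] at r1 r2
    have e1 : (Multiset.map ((fun a => X - C a) ∘ fun i => ((μ i : ℂ))) Finset.univ.val).prod
        = ∏ i, (X - C ((μ i : ℂ))) := rfl
    have e2 : (Multiset.map ((fun a => X - C a) ∘ fun i => ((h.eigenvalues i : ℂ))) Finset.univ.val).prod
        = ∏ i, (X - C ((h.eigenvalues i : ℂ))) := rfl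
    rw [e1, h1.symm, h2] at r1
    rw [e2] at r2
    rw [← r1, ← r2]
  have hnd : (Finset.univ.val.map (fun i => ((h.eigenvalues i : ℂ)))).Nodup := by
    rw [← key]
    exact Finset.univ.nodup.map (fun a b hab => hμ (by exact_mod_cast hab))
  intro i j hij
  have := Multiset.inj_on_of_nodup_map hnd i (Finset.mem_univ i) j (Finset.mem_univ j)
  exact this (by exact_mod_cast congrArg (fun x : ℝ => (x : ℂ)) hij)

lemma aux_extend {T : Type*} [Fintype T] [DecidableEq T] {c m : ℕ} (hcm : c ≤ m)
    (hm : m ≤ Fintype.card T) (g : Fin c → T) (hg : Function.Injective g) :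
    ∃ F : Fin m → T, Function.Injective F ∧ ∀ j : Fin c, F (Fin.castLE hcm j) = g j := by
  classical
  have hcard : Fintype.card (Fin (m - c)) ≤ Fintype.card ((Set.range g)ᶜ : Set T) := by
    rw [Fintype.card_fin]
    have : Fintype.card ((Set.range g)ᶜ : Set T) = Fintype.card T - c := by
      rw [Fintype.card_compl_set, Set.card_range_of_injective hg, Fintype.card_fin]
    omega
  obtain ⟨e⟩ := Function.Embedding.nonempty_of_card_le hcard
  refine ⟨fun j => if hj : (j : ℕ) < c then g ⟨j, hj⟩ else (e ⟨(j : ℕ) - c, by omega⟩ : T), ?_, ?_⟩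
  · intro j j' hjj
    by_cases hj : (j : ℕ) < c <;> by_cases hj' : (j' : ℕ) < c <;>
      simp only [hj, hj', dif_pos, dif_neg, not_false_iff] at hjj
    · have := hg hjj
      exact Fin.ext (by simpa using congrArg Fin.val this)
    · exact absurd ⟨⟨j, hj⟩, hjj⟩ (e ⟨(j' : ℕ) - c, by omega⟩).2
    · exact absurd ⟨⟨j', hj'⟩, hjj.symm⟩ (e ⟨(j : ℕ) - c, by omega⟩).2
    · have := e.injective (Subtype.ext hjj)
      have := congrArg Fin.val this
      simp only at this
      exact Fin.ext (by omega)
  · intro j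
    simp [j.isLt]

lemma aux_red1_last (n : ℕ) (d : Fin (n+1) → ℕ)
    (ψ : ((i : Fin (n+1)) → Fin (d i)) → ℂ) :
    red1 (outer ψ) (Fin.last n)
      = (Matrix.of fun (s : Fin (d (Fin.last n))) (y : (k : Fin n) → Fin (d k.castSucc)) =>
          ψ (Fin.snoc y s)) *
        (Matrix.of fun (s : Fin (d (Fin.last n))) (y : (k : Fin n) → Fin (d k.castSucc)) =>
          ψ (Fin.snoc y s)).conjTranspose := by
  ext s t
  rw [Matrix.mul_apply]
  show (∑ x : (i : Fin (n+1)) → Fin (d i),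
      if x (Fin.last n) = s then ψ x * (starRingEnd ℂ) (ψ (Function.update x (Fin.last n) t)) else 0) = _
  rw [← Equiv.sum_comp (Fin.snocEquiv (fun i => Fin (d i)))]
  rw [Fintype.sum_prod_type]
  simp only [Fin.snocEquiv, Equiv.coe_fn_mk, Fin.snoc_last]
  rw [Finset.sum_comm]
  congr 1
  ext y
  rw [Finset.sum_ite_eq' Finset.univ s (fun z => ψ (Fin.snoc y z) * (starRingEnd ℂ) (ψ (Function.update (Fin.snoc y z) (Fin.last n) t)))]
  simp [Fin.update_snoc_last, Matrix.conjTranspose_apply]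

lemma aux_forward (n : ℕ) (d : Fin (n+1) → ℕ)
    (ψ : ((i : Fin (n+1)) → Fin (d i)) → ℂ)
    (h : (red1 (outer ψ) (Fin.last n)).IsHermitian)
    (hinj : Function.Injective h.eigenvalues) :
    d (Fin.last n) ≤ (∏ k : Fin n, d k.castSucc) + 1 := by
  classical
  set A := (Matrix.of fun (s : Fin (d (Fin.last n))) (y : (k : Fin n) → Fin (d k.castSucc)) =>
          ψ (Fin.snoc y s)) with hA
  have hre : red1 (outer ψ) (Fin.last n) = A * A.conjTranspose := aux_red1_last n d ψ
  have hrank : (red1 (outer ψ) (Fin.last n)).rank ≤ ∏ k : Fin n, d k.castSucc := by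
    rw [hre]
    calc (A * A.conjTranspose).rank ≤ A.rank := Matrix.rank_mul_le_left _ _
      _ ≤ Fintype.card ((k : Fin n) → Fin (d k.castSucc)) := Matrix.rank_le_card_width A
      _ = ∏ k : Fin n, d k.castSucc := by simp [Fintype.card_pi]
  have hcard := h.rank_eq_card_non_zero_eigs
  have hzero : Fintype.card {i // h.eigenvalues i = 0} ≤ 1 := by
    apply Fintype.card_le_one_iff.mpr
    rintro ⟨a, ha⟩ ⟨b, hb⟩
    simpa using hinj (ha.trans hb.symm)
  have hsplit : d (Fin.last n)
      = Fintype.card {i // h.eigenvalues i ≠ 0} + Fintype.card {i // h.eigenvalues i = 0} := by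
    have hh := Finset.card_filter_add_card_filter_not
      (s := (Finset.univ : Finset (Fin (d (Fin.last n))))) (p := fun i => h.eigenvalues i ≠ 0)
    rw [Fintype.card_subtype, Fintype.card_subtype]
    simp only [ne_eq, not_not] at hh ⊢
    rw [hh, Finset.card_fin]
  omega

lemma aux_code (n : ℕ) (hn : 1 ≤ n) (d : Fin (n + 1) → ℕ)
    (hmono : Monotone d) (hd : ∀ i, 1 ≤ d i)
    (hP : d (Fin.last n) ≤ (∏ k : Fin n, d k.castSucc) + 1) :
    ∃ m : ℕ, 1 ≤ m ∧ m ≤ d (Fin.last n) ∧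
      ∃ x : Fin m → ((i : Fin (n + 1)) → Fin (d i)),
      (∀ j j' : Fin m, j ≠ j' → ∀ i : Fin (n + 1), ∃ i', i' ≠ i ∧ x j i' ≠ x j' i') ∧
      (∀ i : Fin (n + 1), ∀ s s' : Fin (d i), s ≠ s' →
        (∃ j, x j i = s) ∨ (∃ j, x j i = s')) := by
  classical
  set P := ∏ k : Fin n, d k.castSucc with hPdef
  have hP1 : 1 ≤ P := Finset.one_le_prod' (fun k _ => hd _)
  set m := min (d (Fin.last n)) P with hmdef
  have hm1 : 1 ≤ m := le_min (hd _) hP1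
  have hmlast : m ≤ d (Fin.last n) := min_le_left _ _
  have hmP : m ≤ P := min_le_right _ _
  have hlastm : d (Fin.last n) ≤ m + 1 := by omega
  -- the largest front coordinate
  set kmax : Fin n := ⟨n - 1, by omega⟩ with hkmax
  set a := d kmax.castSucc with hadef
  have hak : ∀ k : Fin n, d k.castSucc ≤ a := by
    intro k
    exact hmono (by simp [Fin.le_def, Fin.castSucc, hkmax]; omega)
  have hdk_last : ∀ k : Fin n, d k.castSucc ≤ d (Fin.last n) := by
    intro k
    exact hmono (le_of_lt (Fin.castSucc_lt_last k))
  set c := min m a with hcdef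
  have hcm : c ≤ m := min_le_left _ _
  have hca : c ≤ a := min_le_right _ _
  -- the diagonal map
  have ha1 : 1 ≤ a := hd _
  set g : Fin c → ((k : Fin n) → Fin (d k.castSucc)) :=
    fun j k => ⟨(j : ℕ) % d k.castSucc, Nat.mod_lt _ (hd _)⟩ with hgdef
  have hg : Function.Injective g := by
    intro j j' hjj
    have := congrArg (fun z => (z kmax : ℕ)) hjj
    simp only [hgdef] at this
    rw [Nat.mod_eq_of_lt (lt_of_lt_of_le j.isLt hca),
      Nat.mod_eq_of_lt (lt_of_lt_of_le j'.isLt hca)] at this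
    exact Fin.ext this
  have hcardT : m ≤ Fintype.card ((k : Fin n) → Fin (d k.castSucc)) := by
    rw [Fintype.card_pi]
    simpa using hmP
  obtain ⟨F, hF, hFg⟩ := aux_extend hcm hcardT g hg
  -- the code
  refine ⟨m, hm1, hmlast, fun j => Fin.snoc (F j) (⟨(j : ℕ), lt_of_lt_of_le j.isLt hmlast⟩ :
      Fin (d (Fin.last n))), ?_, ?_⟩
  · intro j j' hjj i
    refine Fin.lastCases ?_ ?_ i
    · -- differ at some front coordinate
      obtain ⟨k, hk⟩ := Function.ne_iff.mp (fun h => hjj (hF h))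
      exact ⟨k.castSucc, Fin.castSucc_lt_last k |>.ne, by
        simpa [Fin.snoc_castSucc] using hk⟩
    · intro k0
      refine ⟨Fin.last n, (Fin.castSucc_lt_last k0).ne', ?_⟩
      simp only [Fin.snoc_last]
      intro hcon
      exact hjj (Fin.ext (by simpa using congrArg Fin.val hcon))
  · intro i
    refine Fin.lastCases ?_ ?_ i
    · intro s s' hss
      by_contra hcon
      push_neg at hcon
      obtain ⟨h1, h2⟩ := hcon
      have hs : m ≤ (s : ℕ) := by
        by_contra hlt
        push_neg at hlt
        exact h1 ⟨(s : ℕ), hlt⟩ (by simp [Fin.snoc_last])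
      have hs' : m ≤ (s' : ℕ) := by
        by_contra hlt
        push_neg at hlt
        exact h2 ⟨(s' : ℕ), hlt⟩ (by simp [Fin.snoc_last])
      have := s.isLt
      have := s'.isLt
      exact hss (Fin.ext (by omega))
    · intro k s s' hss
      by_contra hcon
      push_neg at hcon
      obtain ⟨h1, h2⟩ := hcon
      have hck : d k.castSucc ≤ c + 1 := by
        have h3 := hak k
        have h4 := hdk_last k
        omega
      have key : ∀ s0 : Fin (d k.castSucc), (∀ j : Fin m,
          Fin.snoc (α := fun i => Fin (d i)) (F j)
            (⟨(j : ℕ), lt_of_lt_of_le j.isLt hmlast⟩ : Fin (d (Fin.last n))) k.castSucc ≠ s0) →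
          c ≤ (s0 : ℕ) := by
        intro s0 hs0
        by_contra hlt
        push_neg at hlt
        refine hs0 (Fin.castLE hcm ⟨(s0 : ℕ), hlt⟩) ?_
        rw [Fin.snoc_castSucc]
        have : F (Fin.castLE hcm ⟨(s0 : ℕ), hlt⟩) = g ⟨(s0 : ℕ), hlt⟩ := hFg _
        rw [this]
        simp only [hgdef]
        exact Fin.ext (by simp [Nat.mod_eq_of_lt s0.isLt])
      have hs := key s h1
      have hs' := key s' h2
      have := s.isLt
      have := s'.isLt
      exact hss (Fin.ext (by omega))

-- the construction
lemma aux_construct (n : ℕ) (d : Fin (n + 1) → ℕ) (hd : ∀ i, 1 ≤ d i)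
    (m : ℕ) (hm1 : 1 ≤ m) (x : Fin m → ((i : Fin (n + 1)) → Fin (d i)))
    (hsep : ∀ j j' : Fin m, j ≠ j' → ∀ i : Fin (n + 1), ∃ i', i' ≠ i ∧ x j i' ≠ x j' i')
    (hcov : ∀ i : Fin (n + 1), ∀ s s' : Fin (d i), s ≠ s' →
        (∃ j, x j i = s) ∨ (∃ j, x j i = s')) :
    ∃ ψ : ((i : Fin (n + 1)) → Fin (d i)) → ℂ,
        (∑ u, ‖ψ u‖ ^ 2 = 1) ∧
        ∀ i : Fin (n + 1), ∀ h : (red1 (outer ψ) i).IsHermitian,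
          Function.Injective h.eigenvalues := by
  classical
  have hxinj : Function.Injective x := by
    intro j j' hjj
    by_contra hne
    obtain ⟨i', _, hdiff⟩ := hsep j j' hne (Fin.last n)
    exact hdiff (congrFun hjj i')
  have hden : (0 : ℝ) < 2 ^ m - 1 := by
    have : (2 : ℝ) ^ 1 ≤ 2 ^ m := pow_le_pow_right₀ (by norm_num) hm1
    simp at this
    linarith
  set W : Fin m → ℝ := fun j => 2 ^ (j : ℕ) / (2 ^ m - 1) with hWdef
  have hW : ∀ j, 0 < W j := fun j => div_pos (by positivity) hden
  set w : Fin m → ℝ := fun j => Real.sqrt (W j) with hwdef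
  have hww : ∀ j, w j * w j = W j := fun j => Real.mul_self_sqrt (hW j).le
  set ψ : ((i : Fin (n + 1)) → Fin (d i)) → ℂ :=
    fun u => ∑ j, if u = x j then ((w j : ℝ) : ℂ) else 0 with hψdef
  have hψx : ∀ j, ψ (x j) = ((w j : ℝ) : ℂ) := by
    intro j
    rw [hψdef]
    have hiff : ∀ j', x j = x j' ↔ j = j' := fun j' => ⟨fun h => hxinj h, fun h => h ▸ rfl⟩
    simp only [hiff]
    simp
  have hψ0 : ∀ u, (∀ j, u ≠ x j) → ψ u = 0 := by
    intro u hu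
    rw [hψdef]
    exact Finset.sum_eq_zero (fun j _ => if_neg (hu j))
  -- normalization
  have hnorm : ∑ u, ‖ψ u‖ ^ 2 = 1 := by
    rw [← Finset.sum_subset (Finset.subset_univ (Finset.univ.image x))
      (fun u _ hu => by
        rw [hψ0 u (fun j hj => hu (Finset.mem_image.mpr ⟨j, Finset.mem_univ j, hj.symm⟩))]
        simp)]
    rw [Finset.sum_image (fun j _ j' _ h => hxinj h)]
    have : ∀ j : Fin m, ‖ψ (x j)‖ ^ 2 = W j := by
      intro j
      rw [hψx j, Complex.norm_real, Real.norm_eq_abs, sq_abs, sq, hww]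
    rw [Finset.sum_congr rfl (fun j _ => this j)]
    have hgoal : ∑ j : Fin m, W j = 1 := by
      simp only [hWdef]
      rw [← Finset.sum_div, Fin.sum_univ_eq_sum_range (fun i => (2 : ℝ) ^ i) m,
        geom_sum_eq (by norm_num : (2 : ℝ) ≠ 1) m]
      rw [div_eq_one_iff_eq (ne_of_gt hden)]
      norm_num
    exact hgoal
  -- diagonal form of the reduced matrices
  have hdiag : ∀ i : Fin (n + 1), red1 (outer ψ) i
      = Matrix.diagonal (fun s => ((∑ j, if x j i = s then W j else 0 : ℝ) : ℂ)) := by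
    intro i
    have hupdate : ∀ (j : Fin m) (t : Fin (d i)), ψ (Function.update (x j) i t)
        = if x j i = t then ((w j : ℝ) : ℂ) else 0 := by
      intro j t
      simp only [hψdef]
      rw [Finset.sum_eq_single j]
      · by_cases h2 : x j i = t
        · rw [if_pos, if_pos h2]
          rw [show t = x j i from h2.symm]
          exact Function.update_eq_self i (x j)
        · rw [if_neg, if_neg h2]
          rw [Function.update_eq_self_iff]
          exact fun hcon => h2 hcon.symm
      · intro b _ hbj
        apply if_neg
        intro hcon
        obtain ⟨i', hi'i, hne⟩ := hsep j b (Ne.symm hbj) i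
        apply hne
        have := congrFun hcon i'
        rwa [Function.update_of_ne hi'i] at this
      · intro h; exact absurd (Finset.mem_univ _) h
    ext s t
    show (∑ x' : (i : Fin (n + 1)) → Fin (d i),
        if x' i = s then ψ x' * (starRingEnd ℂ) (ψ (Function.update x' i t)) else 0) = _
    rw [← Finset.sum_subset (Finset.subset_univ (Finset.univ.image x))
      (fun u _ hu => by
        rw [hψ0 u (fun j hj => hu (Finset.mem_image.mpr ⟨j, Finset.mem_univ j, hj.symm⟩))]
        simp)]
    rw [Finset.sum_image (fun j _ j' _ h => hxinj h)]
    have hper : ∀ j : Fin m, (if x j i = s then ψ (x j) *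
          (starRingEnd ℂ) (ψ (Function.update (x j) i t)) else 0)
        = if x j i = s ∧ x j i = t then ((W j : ℝ) : ℂ) else 0 := by
      intro j
      rw [hψx j, hupdate j t]
      by_cases h1 : x j i = s <;> by_cases h2 : x j i = t
      · rw [if_pos h1, if_pos h2, if_pos ⟨h1, h2⟩, Complex.conj_ofReal, ← Complex.ofReal_mul, hww]
      · rw [if_pos h1, if_neg h2, if_neg (by tauto), map_zero, mul_zero]
      · rw [if_neg h1, if_neg (by tauto)]
      · rw [if_neg h1, if_neg (by tauto)]
    rw [Finset.sum_congr rfl (fun j _ => hper j)]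
    by_cases hst : s = t
    · subst hst
      rw [Matrix.diagonal_apply_eq]
      rw [Complex.ofReal_sum]
      refine Finset.sum_congr rfl (fun j _ => ?_)
      rw [apply_ite (fun r : ℝ => (r : ℂ)), Complex.ofReal_zero]
      simp [and_self]
    · rw [Matrix.diagonal_apply_ne _ hst]
      refine Finset.sum_eq_zero (fun j _ => if_neg ?_)
      rintro ⟨h1, h2⟩
      exact hst (h1 ▸ h2 ▸ rfl)
  -- injectivity of the diagonal entries
  have hμinj : ∀ i : Fin (n + 1),
      Function.Injective (fun s => ∑ j, if x j i = s then W j else 0) := by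
    intro i s s' hss
    by_contra hne
    simp only at hss
    -- pass to natural number sums
    have hcast : ∀ s0 : Fin (d i), (∑ j, if x j i = s0 then W j else 0)
        = ((∑ j, if x j i = s0 then 2 ^ (j : ℕ) else 0 : ℕ) : ℝ) / (2 ^ m - 1) := by
      intro s0
      rw [Nat.cast_sum, Finset.sum_div]
      refine Finset.sum_congr rfl (fun j _ => ?_)
      rw [apply_ite (fun k : ℕ => (k : ℝ) / (2 ^ m - 1))]
      simp [hWdef]
    rw [hcast s, hcast s'] at hss
    have hnat : (∑ j, if x j i = s then 2 ^ (j : ℕ) else 0 : ℕ)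
        = (∑ j, if x j i = s' then 2 ^ (j : ℕ) else 0 : ℕ) := by
      have h2 := congrArg (fun r : ℝ => r * (2 ^ m - 1)) hss
      simp only [div_mul_cancel₀ _ (ne_of_gt hden)] at h2
      exact_mod_cast h2
    -- to finsets of naturals
    have himg : ∀ s0 : Fin (d i), (∑ j, if x j i = s0 then 2 ^ (j : ℕ) else 0 : ℕ)
        = ∑ k ∈ (Finset.univ.filter (fun j => x j i = s0)).image (Fin.val), 2 ^ k := by
      intro s0
      rw [Finset.sum_image (fun j _ j' _ h => Fin.ext h)]
      rw [Finset.sum_filter]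
    rw [himg s, himg s'] at hnat
    have hsets := Finset.geomSum_injective (le_refl 2) hnat
    -- both fibers must be empty
    have hempty : ∀ j : Fin m, x j i ≠ s := by
      intro j hj
      have hjmem : (j : ℕ) ∈ (Finset.univ.filter (fun j' => x j' i = s')).image (Fin.val) := by
        rw [← hsets]
        exact Finset.mem_image.mpr ⟨j, Finset.mem_filter.mpr ⟨Finset.mem_univ j, hj⟩, rfl⟩
      obtain ⟨j2, hj2, hj2v⟩ := Finset.mem_image.mp hjmem
      have : j2 = j := Fin.ext hj2v
      subst this
      exact hne (hj ▸ (Finset.mem_filter.mp hj2).2 ▸ rfl)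
    have hempty' : ∀ j : Fin m, x j i ≠ s' := by
      intro j hj
      have hjmem : (j : ℕ) ∈ (Finset.univ.filter (fun j' => x j' i = s)).image (Fin.val) := by
        rw [hsets]
        exact Finset.mem_image.mpr ⟨j, Finset.mem_filter.mpr ⟨Finset.mem_univ j, hj⟩, rfl⟩
      obtain ⟨j2, hj2, hj2v⟩ := Finset.mem_image.mp hjmem
      have : j2 = j := Fin.ext hj2v
      subst this
      exact hne ((Finset.mem_filter.mp hj2).2 ▸ hj ▸ rfl)
    rcases hcov i s s' hne with ⟨j, hj⟩ | ⟨j, hj⟩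
    · exact hempty j hj
    · exact hempty' j hj
  exact ⟨ψ, hnorm, fun i h => aux_eig_diag _ (hμinj i) (hdiag i) h⟩

theorem stmt15 (n : ℕ) (hn : 1 ≤ n) (d : Fin (n + 1) → ℕ)
    (hmono : Monotone d) (hd : ∀ i, 1 ≤ d i) :
    (∃ ψ : ((i : Fin (n + 1)) → Fin (d i)) → ℂ,
        (∑ u, ‖ψ u‖ ^ 2 = 1) ∧
        ∀ i : Fin (n + 1), ∀ h : (red1 (outer ψ) i).IsHermitian,
          Function.Injective h.eigenvalues) ↔
      d (Fin.last n) ≤ (∏ k : Fin n, d k.castSucc) + 1 := by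
  constructor
  · rintro ⟨ψ, -, hinj⟩
    have h : (red1 (outer ψ) (Fin.last n)).IsHermitian := by
      rw [aux_red1_last]
      exact Matrix.isHermitian_mul_conjTranspose_self _
    exact aux_forward n d ψ h (hinj _ h)
  · intro hP
    obtain ⟨m, hm1, hmlast, x, hsep, hcov⟩ := aux_code n hn d hmono hd hP
    exact aux_construct n d hd m hm1 x hsep hcov
end

section
/- With A, B, C and ψ as in the construction, let ρ_ABC be the reduced density matrix of |ψ⟩⟨ψ| on the first three factors (partial trace over the fourth factor), and let ρ_A, ρ_B, ρ_C be the one-body reduced density matrices. Then Matrix.rank ρ_ABC ≤ d + 1, and the polygonal inequality is saturated: λmax(ρ_A) + λmax(ρ_B) + λmax(ρ_C) = 2 + λmax(ρ_ABC). -/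
open scoped BigOperators
open ComplexOrder

open Classical in
/-- The largest eigenvalue `λmax` of a Hermitian matrix; junk value `0` for
non-Hermitian matrices. -/
noncomputable def lmaxM {m : Type*} [Fintype m] [DecidableEq m] (H : Matrix m m ℂ) : ℝ :=
  if h : H.IsHermitian then ⨆ i, h.eigenvalues i else 0

/-- The positive semidefinite square root, with the definition `Matrix.PosSemidef.sqrt`
had in the older Mathlib (it has since been removed in favour of `CFC.sqrt`). -/
noncomputable def psdSqrt {n : Type*} [Fintype n] [DecidableEq n] {A : Matrix n n ℂ}
    (hA : A.PosSemidef) : Matrix n n ℂ :=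
  hA.1.eigenvectorUnitary.1 * Matrix.diagonal ((↑) ∘ Real.sqrt ∘ hA.1.eigenvalues) *
    (star hA.1.eigenvectorUnitary : Matrix n n ℂ)

/-- The four-partite pure state `ψ` built from positive semidefinite matrices
`A`, `B`, `C`, identifying `Fin (d+1)` with `{0} ⊕ Fin d` via `Fin.succ`:
`ψ (i+1, 0, 0, l+1) = (√A) i l`, `ψ (0, j+1, 0, l+1) = (√B) j l`,
`ψ (0, 0, k+1, l+1) = (√C) k l`, `ψ (0,0,0,0) = √(1 - tr (A+B+C))`, and `0` otherwise. -/
noncomputable def purif {d : ℕ} {A B C : Matrix (Fin d) (Fin d) ℂ}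
    (hA : A.PosSemidef) (hB : B.PosSemidef) (hC : C.PosSemidef)
    (u : Fin (d + 1) × Fin (d + 1) × Fin (d + 1) × Fin (d + 1)) : ℂ :=
  if hi : u.1 = 0 then
    if hj : u.2.1 = 0 then
      if hk : u.2.2.1 = 0 then
        if _hl : u.2.2.2 = 0 then (Real.sqrt (1 - ((A + B + C).trace).re) : ℂ) else 0
      else
        if hl : u.2.2.2 = 0 then 0 else psdSqrt hC (u.2.2.1.pred hk) (u.2.2.2.pred hl)
    else
      if _hk : u.2.2.1 = 0 then
        if hl : u.2.2.2 = 0 then 0 else psdSqrt hB (u.2.1.pred hj) (u.2.2.2.pred hl)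
      else 0
  else
    if _hj : u.2.1 = 0 then
      if _hk : u.2.2.1 = 0 then
        if hl : u.2.2.2 = 0 then 0 else psdSqrt hA (u.1.pred hi) (u.2.2.2.pred hl)
      else 0
    else 0

/-- The reduced density matrix of the pure state `|ψ⟩⟨ψ|` of four particles on the
first three factors (partial trace over the fourth factor). -/
noncomputable def redABC {N : ℕ}
    (ψ : Fin N × Fin N × Fin N × Fin N → ℂ) :
    Matrix (Fin N × Fin N × Fin N) (Fin N × Fin N × Fin N) ℂ :=
  Matrix.of fun u v =>
    ∑ l, ψ (u.1, u.2.1, u.2.2, l) * (starRingEnd ℂ) (ψ (v.1, v.2.1, v.2.2, l))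

/-- One-body reduced density matrix of a tripartite state on the first factor. -/
noncomputable def redA {a b c : ℕ}
    (ρ : Matrix (Fin a × Fin b × Fin c) (Fin a × Fin b × Fin c) ℂ) :
    Matrix (Fin a) (Fin a) ℂ :=
  Matrix.of fun i i' => ∑ j, ∑ k, ρ (i, j, k) (i', j, k)

/-- One-body reduced density matrix of a tripartite state on the second factor. -/
noncomputable def redB {a b c : ℕ}
    (ρ : Matrix (Fin a × Fin b × Fin c) (Fin a × Fin b × Fin c) ℂ) :
    Matrix (Fin b) (Fin b) ℂ :=
  Matrix.of fun j j' => ∑ i, ∑ k, ρ (i, j, k) (i, j', k)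

/-- One-body reduced density matrix of a tripartite state on the third factor. -/
noncomputable def redC {a b c : ℕ}
    (ρ : Matrix (Fin a × Fin b × Fin c) (Fin a × Fin b × Fin c) ℂ) :
    Matrix (Fin c) (Fin c) ℂ :=
  Matrix.of fun k k' => ∑ i, ∑ j, ρ (i, j, k) (i, j, k')

namespace Helper

open Matrix

section Spectral

variable {n : Type*} [Fintype n] [DecidableEq n] {H : Matrix n n ℂ}

lemma lmaxM_eq (hH : H.IsHermitian) : lmaxM H = ⨆ i, hH.eigenvalues i := by
  simp [lmaxM, hH]

lemma eigenvalues_le_lmaxM (hH : H.IsHermitian) (i : n) : hH.eigenvalues i ≤ lmaxM H := by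
  rw [lmaxM_eq hH]
  exact le_ciSup (Set.Finite.bddAbove (Set.finite_range _)) i

/-- If `t•1 - H` is PSD and `x` is an eigenvector of `H` with eigenvalue `s`, then `s ≤ t`. -/
lemma eig_le_of_psd {t s : ℝ} (hpsd : ((t : ℂ) • (1 : Matrix n n ℂ) - H).PosSemidef)
    {x : n → ℂ} (hx : x ≠ 0) (hevec : H *ᵥ x = (s : ℂ) • x) : s ≤ t := by
  have h2 := hpsd.dotProduct_mulVec_nonneg x
  have hmv : ((t : ℂ) • (1 : Matrix n n ℂ) - H) *ᵥ x = ((t - s : ℝ) : ℂ) • x := by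
    rw [Matrix.sub_mulVec, Matrix.smul_mulVec, Matrix.one_mulVec, hevec]
    push_cast
    rw [sub_smul]
  rw [hmv, dotProduct_smul] at h2
  have hxx : (0 : ℂ) < star x ⬝ᵥ x := by
    rcases (dotProduct_star_self_nonneg x).lt_or_eq with h | h
    · exact h
    · exact absurd (dotProduct_star_self_eq_zero.mp h.symm) hx
  rw [Complex.lt_def] at hxx
  rw [Complex.le_def] at h2
  have hre : (((t - s : ℝ) : ℂ) • (star x ⬝ᵥ x)).re = (t - s) * (star x ⬝ᵥ x).re := by
    simp [smul_eq_mul, Complex.mul_re]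
  have hpos : 0 < (star x ⬝ᵥ x).re := by simpa using hxx.1
  have h6 : 0 ≤ (t - s) * (star x ⬝ᵥ x).re := by
    have := h2.1
    rw [hre] at this
    simpa using this
  nlinarith

/-- All eigenvalues at most `t` implies `t•1 - H` is PSD. -/
lemma psd_of_lmaxM_le [Nonempty n] (hH : H.IsHermitian) {t : ℝ} (h : lmaxM H ≤ t) :
    ((t : ℂ) • (1 : Matrix n n ℂ) - H).PosSemidef := by
  set U : Matrix n n ℂ := (hH.eigenvectorUnitary : Matrix n n ℂ)
  have hU : U * star U = 1 := Matrix.mem_unitaryGroup_iff.mp hH.eigenvectorUnitary.2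
  have key : (t : ℂ) • (1 : Matrix n n ℂ) - H
      = U * Matrix.diagonal (fun i => ((t - hH.eigenvalues i : ℝ) : ℂ)) * star U := by
    have hd : Matrix.diagonal (fun i => ((t - hH.eigenvalues i : ℝ) : ℂ))
        = (t : ℂ) • (1 : Matrix n n ℂ) - Matrix.diagonal (RCLike.ofReal ∘ hH.eigenvalues) := by
      rw [Matrix.smul_one_eq_diagonal, Matrix.diagonal_sub]
      ext i j
      rcases eq_or_ne i j with rfl | hij
      · simp only [Matrix.diagonal_apply_eq, Function.comp_apply]
        push_cast
        rfl
      · simp [Matrix.diagonal_apply_ne _ hij]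
    rw [hd, Matrix.mul_sub, Matrix.sub_mul, Matrix.mul_smul, Matrix.mul_one,
      Matrix.smul_mul, hU]
    conv_lhs => rw [hH.spectral_theorem]
    rfl
  rw [key]
  refine (Matrix.PosSemidef.diagonal ?_).mul_mul_conjTranspose_same U
  intro i
  simp only [Pi.zero_apply]
  have hle : hH.eigenvalues i ≤ t := (eigenvalues_le_lmaxM hH i).trans h
  exact Complex.zero_le_real.mpr (by linarith)

lemma lmaxM_le_of_psd [Nonempty n] (hH : H.IsHermitian) {t : ℝ}
    (hpsd : ((t : ℂ) • (1 : Matrix n n ℂ) - H).PosSemidef) : lmaxM H ≤ t := by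
  rw [lmaxM_eq hH]
  refine ciSup_le fun i => ?_
  have hmv := hH.mulVec_eigenvectorBasis i
  refine eig_le_of_psd hpsd (x := ⇑(hH.eigenvectorBasis i))
    (by simpa using hH.eigenvectorBasis.orthonormal.ne_zero i) ?_
  rw [hmv]
  ext j
  simp [Complex.real_smul]

lemma le_lmaxM_of_eigenvector [Nonempty n] (hH : H.IsHermitian) {t : ℝ} {x : n → ℂ}
    (hx : x ≠ 0) (hevec : H *ᵥ x = (t : ℂ) • x) : t ≤ lmaxM H :=
  eig_le_of_psd (psd_of_lmaxM_le hH le_rfl) hx hevec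

lemma lmaxM_eq_of [Nonempty n] (hH : H.IsHermitian) {t : ℝ}
    (hpsd : ((t : ℂ) • (1 : Matrix n n ℂ) - H).PosSemidef)
    {x : n → ℂ} (hx : x ≠ 0) (hevec : H *ᵥ x = (t : ℂ) • x) : lmaxM H = t :=
  le_antisymm (lmaxM_le_of_psd hH hpsd) (le_lmaxM_of_eigenvector hH hx hevec)

/-- `λmax (M Mᴴ) ≤ t` provided `t ≥ 0` and `t•1 - Mᴴ M` is PSD. -/
lemma lmaxM_mul_conjTranspose_le {m : Type*} [Fintype m] [DecidableEq m] [Nonempty m]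
    (M : Matrix m n ℂ) {t : ℝ} (ht : 0 ≤ t)
    (h : ((t : ℂ) • (1 : Matrix n n ℂ) - Mᴴ * M).PosSemidef) :
    lmaxM (M * Mᴴ) ≤ t := by
  have hH : (M * Mᴴ).IsHermitian := Matrix.isHermitian_mul_conjTranspose_self M
  rw [lmaxM_eq hH]
  refine ciSup_le fun i => ?_
  set lam := hH.eigenvalues i with hlam
  rcases le_or_gt lam 0 with hl | hl
  · linarith
  · set v : m → ℂ := ⇑(hH.eigenvectorBasis i) with hv
    have hvne : v ≠ 0 := by rw [hv]; simpa using hH.eigenvectorBasis.orthonormal.ne_zero i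
    have hmv : (M * Mᴴ) *ᵥ v = (lam : ℂ) • v := by
      rw [hv, hH.mulVec_eigenvectorBasis i]
      ext j
      simp [Complex.real_smul, hlam]
    set y := Mᴴ *ᵥ v with hy
    have hyev : (Mᴴ * M) *ᵥ y = (lam : ℂ) • y := by
      rw [hy, Matrix.mulVec_mulVec, Matrix.mul_assoc, ← Matrix.mulVec_mulVec, hmv,
        Matrix.mulVec_smul]
    have hyne : y ≠ 0 := by
      intro h0
      have : (M * Mᴴ) *ᵥ v = 0 := by
        rw [← Matrix.mulVec_mulVec, ← hy, h0, Matrix.mulVec_zero]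
      rw [hmv] at this
      rcases smul_eq_zero.mp this with h1 | h1
      · exact (by exact_mod_cast hl.ne' : (lam : ℂ) ≠ 0) h1
      · exact hvne h1
    exact eig_le_of_psd h hyne hyev

end Spectral

section Ext1

/-- Extend a `d × d` matrix to `(d+1) × (d+1)` by putting `c` in the corner. -/
noncomputable def ext1 {d : ℕ} (c : ℝ) (A : Matrix (Fin d) (Fin d) ℂ) :
    Matrix (Fin (d + 1)) (Fin (d + 1)) ℂ :=
  Matrix.of (Fin.cases (Fin.cases ((c : ℝ) : ℂ) fun _ => 0)
    fun i => Fin.cases 0 fun i' => A i i')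

variable {d : ℕ} {A : Matrix (Fin d) (Fin d) ℂ} {c : ℝ}

@[simp] lemma ext1_zero_zero : ext1 c A 0 0 = (c : ℂ) := by simp [ext1]
@[simp] lemma ext1_zero_succ (i : Fin d) : ext1 c A 0 i.succ = 0 := by simp [ext1]
@[simp] lemma ext1_succ_zero (i : Fin d) : ext1 c A i.succ 0 = 0 := by simp [ext1]
@[simp] lemma ext1_succ_succ (i i' : Fin d) : ext1 c A i.succ i'.succ = A i i' := by simp [ext1]

lemma ext1_isHermitian (hA : A.IsHermitian) : (ext1 c A).IsHermitian := by
  ext i j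
  rw [Matrix.conjTranspose_apply]
  induction i using Fin.cases with
  | zero =>
    induction j using Fin.cases with
    | zero => simp [Complex.conj_ofReal]
    | succ j => simp
  | succ i =>
    induction j using Fin.cases with
    | zero => simp
    | succ j => simpa using hA.apply i j

lemma ext1_posSemidef (hc : 0 ≤ c) (hA : A.PosSemidef) : (ext1 c A).PosSemidef := by
  refine Matrix.PosSemidef.of_dotProduct_mulVec_nonneg (ext1_isHermitian hA.1) fun x => ?_
  have h2 := hA.dotProduct_mulVec_nonneg (x ∘ Fin.succ)
  have key : star x ⬝ᵥ (ext1 c A) *ᵥ x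
      = (c : ℂ) * (star (x 0) * x 0) + star (x ∘ Fin.succ) ⬝ᵥ A *ᵥ (x ∘ Fin.succ) := by
    simp only [dotProduct, Matrix.mulVec, Pi.star_apply, Function.comp_apply,
      Fin.sum_univ_succ, ext1_zero_zero, ext1_zero_succ, ext1_succ_zero, ext1_succ_succ,
      zero_mul, mul_zero, Finset.sum_const_zero, add_zero, zero_add]
    ring_nf
  rw [key]
  refine add_nonneg (mul_nonneg ?_ ?_) h2
  · exact Complex.zero_le_real.mpr hc
  · exact star_mul_self_nonneg (x 0)

lemma smul_one_sub_ext1 : (c : ℂ) • (1 : Matrix (Fin (d+1)) (Fin (d+1)) ℂ) - ext1 c A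
    = ext1 0 ((c : ℂ) • (1 : Matrix (Fin d) (Fin d) ℂ) - A) := by
  ext i j
  induction i using Fin.cases with
  | zero =>
    induction j using Fin.cases with
    | zero => simp [Matrix.one_apply]
    | succ j => simp [Matrix.one_apply, (Fin.succ_ne_zero j).symm]
  | succ i =>
    induction j using Fin.cases with
    | zero => simp [Matrix.one_apply, Fin.succ_ne_zero i]
    | succ j => simp [Matrix.one_apply, Fin.succ_inj]

lemma ext1_mulVec_single :
    (ext1 c A) *ᵥ (Pi.single 0 1 : Fin (d+1) → ℂ) = (c : ℂ) • (Pi.single 0 1 : Fin (d+1) → ℂ) := by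
  funext i
  induction i using Fin.cases with
  | zero => simp [Matrix.mulVec_single]
  | succ i => simp [Matrix.mulVec_single, Fin.succ_ne_zero i]

lemma lmaxM_ext1 (hA : A.IsHermitian)
    (hc : ((c : ℂ) • (1 : Matrix (Fin d) (Fin d) ℂ) - A).PosSemidef) :
    lmaxM (ext1 c A) = c := by
  refine lmaxM_eq_of (ext1_isHermitian hA) ?_ (x := (Pi.single 0 1 : Fin (d+1) → ℂ)) ?_
    ext1_mulVec_single
  · rw [smul_one_sub_ext1]
    exact ext1_posSemidef le_rfl hc
  · intro h0
    simpa using congrFun h0 0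

end Ext1

section SqrtSums

variable {d : ℕ} {X : Matrix (Fin d) (Fin d) ℂ}

lemma psdSqrt_conjTranspose (hX : X.PosSemidef) : (psdSqrt hX)ᴴ = psdSqrt hX := by
  simp [psdSqrt, Matrix.conjTranspose_mul, Matrix.star_eq_conjTranspose,
    Matrix.diagonal_conjTranspose, Matrix.mul_assoc]
  congr 3
  funext i
  simp

lemma psdSqrt_mul_self {n : Type*} [Fintype n] [DecidableEq n] {X : Matrix n n ℂ}
    (hX : X.PosSemidef) : psdSqrt hX * psdSqrt hX = X := by
  have hU : (star (hX.1.eigenvectorUnitary : Matrix n n ℂ)) * hX.1.eigenvectorUnitary = 1 :=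
    Unitary.coe_star_mul_self _
  unfold psdSqrt
  simp only [Matrix.mul_assoc]
  rw [← Matrix.mul_assoc (star (hX.1.eigenvectorUnitary : Matrix n n ℂ)), hU, Matrix.one_mul,
    ← Matrix.mul_assoc (Matrix.diagonal _), Matrix.diagonal_mul_diagonal]
  conv_rhs => rw [hX.1.spectral_theorem, Unitary.conjStarAlgAut_apply]
  rw [Matrix.mul_assoc]
  congr 3
  funext i
  simp only [Function.comp_apply]
  rw [← Complex.ofReal_mul, Real.mul_self_sqrt (hX.eigenvalues_nonneg i)]
  rfl

lemma conj_sqrt (hX : X.PosSemidef) (i l : Fin d) :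
    (starRingEnd ℂ) (psdSqrt hX i l) = psdSqrt hX l i :=
  by
    have h := congrFun (congrFun (psdSqrt_conjTranspose hX) l) i
    simpa [Matrix.conjTranspose_apply] using h

lemma sum_sqrt_mul_conj (hX : X.PosSemidef) (i i' : Fin d) :
    ∑ l, psdSqrt hX i l * (starRingEnd ℂ) (psdSqrt hX i' l) = X i i' := by
  calc ∑ l, psdSqrt hX i l * (starRingEnd ℂ) (psdSqrt hX i' l)
      = ∑ l, psdSqrt hX i l * psdSqrt hX l i' := by
        refine Finset.sum_congr rfl fun l _ => ?_
        rw [conj_sqrt hX]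
    _ = (psdSqrt hX * psdSqrt hX) i i' := (Matrix.mul_apply).symm
    _ = X i i' := by rw [psdSqrt_mul_self hX]

lemma sum_conj_mul_sqrt (hX : X.PosSemidef) (l l' : Fin d) :
    ∑ i, (starRingEnd ℂ) (psdSqrt hX i l) * psdSqrt hX i l' = X l l' := by
  calc ∑ i, (starRingEnd ℂ) (psdSqrt hX i l) * psdSqrt hX i l'
      = ∑ i, psdSqrt hX l i * psdSqrt hX i l' := by
        refine Finset.sum_congr rfl fun i _ => ?_
        rw [conj_sqrt hX]
    _ = (psdSqrt hX * psdSqrt hX) l l' := (Matrix.mul_apply).symm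
    _ = X l l' := by rw [psdSqrt_mul_self hX]

lemma sum_sum_trace (hX : X.PosSemidef) :
    ∑ k, ∑ l, psdSqrt hX k l * (starRingEnd ℂ) (psdSqrt hX k l) = X.trace := by
  rw [Matrix.trace]
  refine Finset.sum_congr rfl fun k _ => ?_
  rw [sum_sqrt_mul_conj hX]
  rfl

lemma diag_re_nonneg (hX : X.PosSemidef) (i : Fin d) : 0 ≤ (X i i).re := by
  have h := hX.dotProduct_mulVec_nonneg (Pi.single i 1)
  have heq : star (Pi.single i 1 : Fin d → ℂ) ⬝ᵥ X *ᵥ (Pi.single i 1 : Fin d → ℂ) = X i i := by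
    simp [dotProduct, Matrix.mulVec_single, Pi.single_apply, Pi.star_apply, apply_ite,
      Finset.sum_ite_eq']
  rw [heq] at h
  simpa using (Complex.le_def.mp h).1

lemma trace_re_nonneg (hX : X.PosSemidef) : 0 ≤ X.trace.re := by
  rw [Matrix.trace]
  rw [Complex.re_sum]
  exact Finset.sum_nonneg fun i _ => diag_re_nonneg hX i

lemma trace_eq_re (hX : X.PosSemidef) : X.trace = ((X.trace.re : ℝ) : ℂ) := by
  have h0 := Matrix.trace_conjTranspose X
  rw [hX.1] at h0
  have h1 : (starRingEnd ℂ) X.trace = X.trace := by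
    rw [← Complex.star_def]
    exact h0.symm
  exact ((Complex.conj_eq_iff_re).mp h1).symm

end SqrtSums

end Helper
namespace Helper

section Purif

variable {d : ℕ} {A B C : Matrix (Fin d) (Fin d) ℂ}
  (hA : A.PosSemidef) (hB : B.PosSemidef) (hC : C.PosSemidef)

@[simp] lemma purif_0000 :
    purif hA hB hC (0, 0, 0, 0) = ((Real.sqrt (1 - ((A + B + C).trace).re) : ℝ) : ℂ) := by
  simp [purif]

@[simp] lemma purif_A (i l : Fin d) :
    purif hA hB hC (i.succ, 0, 0, l.succ) = psdSqrt hA i l := by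
  simp [purif, Fin.succ_ne_zero]

@[simp] lemma purif_B (j l : Fin d) :
    purif hA hB hC (0, j.succ, 0, l.succ) = psdSqrt hB j l := by
  simp [purif, Fin.succ_ne_zero]

@[simp] lemma purif_C (k l : Fin d) :
    purif hA hB hC (0, 0, k.succ, l.succ) = psdSqrt hC k l := by
  simp [purif, Fin.succ_ne_zero]

@[simp] lemma purif_z1 (i : Fin d) (z w : Fin (d+1)) (j : Fin d) :
    purif hA hB hC (i.succ, j.succ, z, w) = 0 := by
  simp [purif, Fin.succ_ne_zero]

@[simp] lemma purif_z2 (i k : Fin d) (w : Fin (d+1)) :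
    purif hA hB hC (i.succ, 0, k.succ, w) = 0 := by
  simp [purif, Fin.succ_ne_zero]

@[simp] lemma purif_z3 (i : Fin d) :
    purif hA hB hC (i.succ, 0, 0, 0) = 0 := by
  simp [purif, Fin.succ_ne_zero]

@[simp] lemma purif_z4 (j k : Fin d) (w : Fin (d+1)) :
    purif hA hB hC (0, j.succ, k.succ, w) = 0 := by
  simp [purif, Fin.succ_ne_zero]

@[simp] lemma purif_z5 (j : Fin d) :
    purif hA hB hC (0, j.succ, 0, 0) = 0 := by
  simp [purif, Fin.succ_ne_zero]

@[simp] lemma purif_z6 (k : Fin d) :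
    purif hA hB hC (0, 0, k.succ, 0) = 0 := by
  simp [purif, Fin.succ_ne_zero]

@[simp] lemma purif_z7 (l : Fin d) :
    purif hA hB hC (0, 0, 0, l.succ) = 0 := by
  simp [purif, Fin.succ_ne_zero]

lemma redA_purif (ht : 0 ≤ 1 - ((A + B + C).trace).re) :
    redA (redABC (purif hA hB hC))
      = ext1 (1 - ((A + B + C).trace).re + (B.trace).re + (C.trace).re) A := by
  ext i i'
  simp only [redA, redABC, Matrix.of_apply]
  induction i using Fin.cases with
  | zero =>
    induction i' using Fin.cases with
    | zero =>
      simp only [Fin.sum_univ_succ, purif_0000, purif_B, purif_C, purif_z1, purif_z4, purif_z5,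
        purif_z6, purif_z7, map_zero, mul_zero, zero_mul, Finset.sum_const_zero, add_zero,
        zero_add, ext1_zero_zero]
      rw [sum_sum_trace hC, sum_sum_trace hB, trace_eq_re hB, trace_eq_re hC,
        Complex.conj_ofReal, ← Complex.ofReal_mul, Real.mul_self_sqrt ht]
      push_cast [Complex.ofReal_re]
      ring
    | succ i' =>
      simp only [Fin.sum_univ_succ, purif_0000, purif_A, purif_B, purif_C, purif_z1, purif_z2,
        purif_z3, purif_z4, purif_z5, purif_z6, purif_z7, map_zero, mul_zero, zero_mul,
        Finset.sum_const_zero, add_zero, zero_add, ext1_zero_succ]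
  | succ i =>
    induction i' using Fin.cases with
    | zero =>
      simp only [Fin.sum_univ_succ, purif_0000, purif_A, purif_B, purif_C, purif_z1, purif_z2,
        purif_z3, purif_z4, purif_z5, purif_z6, purif_z7, map_zero, mul_zero, zero_mul,
        Finset.sum_const_zero, add_zero, zero_add, ext1_succ_zero]
    | succ i' =>
      simp only [Fin.sum_univ_succ, purif_A, purif_z1, purif_z2, purif_z3, map_zero, mul_zero,
        zero_mul, Finset.sum_const_zero, add_zero, zero_add, ext1_succ_succ]
      rw [sum_sqrt_mul_conj hA]

end Purif

end Helper
namespace Helper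

open Matrix

section Purif2

variable {d : ℕ} {A B C : Matrix (Fin d) (Fin d) ℂ}
  (hA : A.PosSemidef) (hB : B.PosSemidef) (hC : C.PosSemidef)

lemma redB_purif (ht : 0 ≤ 1 - ((A + B + C).trace).re) :
    redB (redABC (purif hA hB hC))
      = ext1 (1 - ((A + B + C).trace).re + (A.trace).re + (C.trace).re) B := by
  ext j j'
  simp only [redB, redABC, Matrix.of_apply]
  induction j using Fin.cases with
  | zero =>
    induction j' using Fin.cases with
    | zero =>
      simp only [Fin.sum_univ_succ, purif_0000, purif_A, purif_B, purif_C, purif_z1, purif_z2,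
        purif_z3, purif_z4, purif_z5, purif_z6, purif_z7, map_zero, mul_zero, zero_mul,
        Finset.sum_const_zero, add_zero, zero_add, ext1_zero_zero]
      rw [sum_sum_trace hC, sum_sum_trace hA, trace_eq_re hA, trace_eq_re hC,
        Complex.conj_ofReal, ← Complex.ofReal_mul, Real.mul_self_sqrt ht]
      push_cast [Complex.ofReal_re]
      ring
    | succ j' =>
      simp only [Fin.sum_univ_succ, purif_0000, purif_A, purif_B, purif_C, purif_z1, purif_z2,
        purif_z3, purif_z4, purif_z5, purif_z6, purif_z7, map_zero, mul_zero, zero_mul,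
        Finset.sum_const_zero, add_zero, zero_add, ext1_zero_succ]
  | succ j =>
    induction j' using Fin.cases with
    | zero =>
      simp only [Fin.sum_univ_succ, purif_0000, purif_A, purif_B, purif_C, purif_z1, purif_z2,
        purif_z3, purif_z4, purif_z5, purif_z6, purif_z7, map_zero, mul_zero, zero_mul,
        Finset.sum_const_zero, add_zero, zero_add, ext1_succ_zero]
    | succ j' =>
      simp only [Fin.sum_univ_succ, purif_0000, purif_A, purif_B, purif_C, purif_z1, purif_z2,
        purif_z3, purif_z4, purif_z5, purif_z6, purif_z7, map_zero, mul_zero, zero_mul,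
        Finset.sum_const_zero, add_zero, zero_add, ext1_succ_succ]
      rw [sum_sqrt_mul_conj hB]

lemma redC_purif (ht : 0 ≤ 1 - ((A + B + C).trace).re) :
    redC (redABC (purif hA hB hC))
      = ext1 (1 - ((A + B + C).trace).re + (A.trace).re + (B.trace).re) C := by
  ext k k'
  simp only [redC, redABC, Matrix.of_apply]
  induction k using Fin.cases with
  | zero =>
    induction k' using Fin.cases with
    | zero =>
      simp only [Fin.sum_univ_succ, purif_0000, purif_A, purif_B, purif_C, purif_z1, purif_z2,
        purif_z3, purif_z4, purif_z5, purif_z6, purif_z7, map_zero, mul_zero, zero_mul,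
        Finset.sum_const_zero, add_zero, zero_add, ext1_zero_zero]
      rw [sum_sum_trace hB, sum_sum_trace hA, trace_eq_re hA, trace_eq_re hB,
        Complex.conj_ofReal, ← Complex.ofReal_mul, Real.mul_self_sqrt ht]
      push_cast [Complex.ofReal_re]
      ring
    | succ k' =>
      simp only [Fin.sum_univ_succ, purif_0000, purif_A, purif_B, purif_C, purif_z1, purif_z2,
        purif_z3, purif_z4, purif_z5, purif_z6, purif_z7, map_zero, mul_zero, zero_mul,
        Finset.sum_const_zero, add_zero, zero_add, ext1_zero_succ]
  | succ k =>
    induction k' using Fin.cases with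
    | zero =>
      simp only [Fin.sum_univ_succ, purif_0000, purif_A, purif_B, purif_C, purif_z1, purif_z2,
        purif_z3, purif_z4, purif_z5, purif_z6, purif_z7, map_zero, mul_zero, zero_mul,
        Finset.sum_const_zero, add_zero, zero_add, ext1_succ_zero]
    | succ k' =>
      simp only [Fin.sum_univ_succ, purif_0000, purif_A, purif_B, purif_C, purif_z1, purif_z2,
        purif_z3, purif_z4, purif_z5, purif_z6, purif_z7, map_zero, mul_zero, zero_mul,
        Finset.sum_const_zero, add_zero, zero_add, ext1_succ_succ]
      rw [sum_sqrt_mul_conj hC]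

@[simp] lemma purif_z8 (j : Fin d) (z : Fin (d+1)) :
    purif hA hB hC (0, j.succ, z, 0) = 0 := by
  simp [purif, Fin.succ_ne_zero]

@[simp] lemma purif_z9 (x : Fin d) (y z : Fin (d+1)) :
    purif hA hB hC (x.succ, y, z, 0) = 0 := by
  simp [purif, Fin.succ_ne_zero]

/-- The purification viewed as a `(d+1)³ × (d+1)` matrix. -/
noncomputable def pmat : Matrix (Fin (d+1) × Fin (d+1) × Fin (d+1)) (Fin (d+1)) ℂ :=
  Matrix.of fun u l => purif hA hB hC (u.1, u.2.1, u.2.2, l)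

lemma redABC_eq_mul : redABC (purif hA hB hC) = pmat hA hB hC * (pmat hA hB hC)ᴴ := by
  ext u v
  simp only [redABC, Matrix.of_apply, Matrix.mul_apply, Matrix.conjTranspose_apply, pmat,
    Complex.star_def]

lemma conjTranspose_mul_pmat (ht : 0 ≤ 1 - ((A + B + C).trace).re) :
    (pmat hA hB hC)ᴴ * pmat hA hB hC = ext1 (1 - ((A + B + C).trace).re) (A + B + C) := by
  ext l l'
  simp only [Matrix.mul_apply, Matrix.conjTranspose_apply, pmat, Matrix.of_apply,
    Complex.star_def]
  rw [Fintype.sum_prod_type]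
  simp only [Fintype.sum_prod_type]
  induction l using Fin.cases with
  | zero =>
    induction l' using Fin.cases with
    | zero =>
      simp only [Fin.sum_univ_succ, purif_0000, purif_A, purif_B, purif_C, purif_z1, purif_z2,
        purif_z3, purif_z4, purif_z5, purif_z6, purif_z7, map_zero, mul_zero, zero_mul,
        Finset.sum_const_zero, add_zero, zero_add, ext1_zero_zero]
      rw [Complex.conj_ofReal, ← Complex.ofReal_mul, Real.mul_self_sqrt ht]
    | succ l' =>
      simp only [Fin.sum_univ_succ, purif_0000, purif_A, purif_B, purif_C, purif_z1, purif_z2,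
        purif_z3, purif_z4, purif_z5, purif_z6, purif_z7, map_zero, mul_zero, zero_mul,
        Finset.sum_const_zero, add_zero, zero_add, ext1_zero_succ]
  | succ l =>
    induction l' using Fin.cases with
    | zero =>
      simp only [Fin.sum_univ_succ, purif_0000, purif_A, purif_B, purif_C, purif_z1, purif_z2,
        purif_z3, purif_z4, purif_z5, purif_z6, purif_z7, map_zero, mul_zero, zero_mul,
        Finset.sum_const_zero, add_zero, zero_add, ext1_succ_zero]
    | succ l' =>
      simp only [Fin.sum_univ_succ, purif_0000, purif_A, purif_B, purif_C, purif_z1, purif_z2,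
        purif_z3, purif_z4, purif_z5, purif_z6, purif_z7, map_zero, mul_zero, zero_mul,
        Finset.sum_const_zero, add_zero, zero_add, ext1_succ_succ]
      rw [sum_conj_mul_sqrt hA, sum_conj_mul_sqrt hB, sum_conj_mul_sqrt hC]
      simp only [Matrix.add_apply]
      ring

lemma redABC_mulVec_single (ht : 0 ≤ 1 - ((A + B + C).trace).re) :
    redABC (purif hA hB hC) *ᵥ
        (Pi.single (0, 0, 0) 1 : Fin (d+1) × Fin (d+1) × Fin (d+1) → ℂ)
      = (((1 - ((A + B + C).trace).re : ℝ)) : ℂ) •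
        (Pi.single (0, 0, 0) 1 : Fin (d+1) × Fin (d+1) × Fin (d+1) → ℂ) := by
  rw [Matrix.mulVec_single, MulOpposite.op_one, one_smul]
  funext u
  obtain ⟨x, y, z⟩ := u
  simp only [redABC, Matrix.col_apply, Matrix.of_apply, mul_one, Pi.smul_apply, Pi.single_apply, smul_eq_mul]
  induction x using Fin.cases with
  | zero =>
    induction y using Fin.cases with
    | zero =>
      induction z using Fin.cases with
      | zero =>
        simp only [Fin.sum_univ_succ, purif_0000, purif_z7, map_zero, mul_zero, zero_mul,
          Finset.sum_const_zero, add_zero]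
        rw [Complex.conj_ofReal, ← Complex.ofReal_mul, Real.mul_self_sqrt ht]
        simp
      | succ z =>
        rw [if_neg (by simp [Prod.ext_iff, Fin.succ_ne_zero])]
        simp only [Fin.sum_univ_succ, purif_z6, purif_z7, map_zero, mul_zero, zero_mul,
          Finset.sum_const_zero, add_zero, zero_add]
    | succ y =>
      rw [if_neg (by simp [Prod.ext_iff, Fin.succ_ne_zero])]
      simp only [Fin.sum_univ_succ, purif_z8, purif_z7, map_zero, mul_zero, zero_mul,
        Finset.sum_const_zero, add_zero, zero_add]
  | succ x =>
    rw [if_neg (by simp [Prod.ext_iff, Fin.succ_ne_zero])]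
    simp only [Fin.sum_univ_succ, purif_z9, purif_z7, map_zero, mul_zero, zero_mul,
      Finset.sum_const_zero, add_zero, zero_add]

end Purif2

end Helper

open Matrix in
theorem stmt18 (d : ℕ) (hd : 1 ≤ d)
    (A B C : Matrix (Fin d) (Fin d) ℂ)
    (hA : A.PosSemidef) (hB : B.PosSemidef) (hC : C.PosSemidef)
    (hbound : lmaxM (A + B + C) ≤ 1 - ((A + B + C).trace).re) :
    (redABC (purif hA hB hC)).rank ≤ d + 1 ∧
    lmaxM (redA (redABC (purif hA hB hC))) + lmaxM (redB (redABC (purif hA hB hC)))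
        + lmaxM (redC (redABC (purif hA hB hC)))
      = 2 + lmaxM (redABC (purif hA hB hC)) := by
  have hdne : Nonempty (Fin d) := ⟨⟨0, hd⟩⟩
  have hSps : (A + B + C).PosSemidef := (hA.add hB).add hC
  have ht0 : 0 ≤ 1 - ((A + B + C).trace).re := by
    have h1 := Helper.eigenvalues_le_lmaxM hSps.1 (Classical.arbitrary (Fin d))
    have h2 := hSps.eigenvalues_nonneg (Classical.arbitrary (Fin d))
    linarith
  have hpsdS : ((((1 - ((A + B + C).trace).re : ℝ)) : ℂ) • 1 - (A + B + C)).PosSemidef :=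
    Helper.psd_of_lmaxM_le hSps.1 hbound
  have hsmul_psd : ∀ r : ℝ, 0 ≤ r → (((r : ℝ) : ℂ) • (1 : Matrix (Fin d) (Fin d) ℂ)).PosSemidef := by
    intro r hr
    rw [Matrix.smul_one_eq_diagonal]
    refine Matrix.PosSemidef.diagonal ?_
    intro i
    simpa using Complex.zero_le_real.mpr hr
  have hArr := Helper.trace_re_nonneg hA
  have hBrr := Helper.trace_re_nonneg hB
  have hCrr := Helper.trace_re_nonneg hC
  -- PSD facts for the shifted one-body pieces
  have hpsdA : ((((1 - ((A + B + C).trace).re + (B.trace).re + (C.trace).re : ℝ)) : ℂ) • 1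
      - A).PosSemidef := by
    have hid : ((((1 - ((A + B + C).trace).re + (B.trace).re + (C.trace).re : ℝ)) : ℂ) • 1 - A)
        = (((((1 - ((A + B + C).trace).re : ℝ)) : ℂ) • 1 - (A + B + C)) + B + C)
          + ((((B.trace).re + (C.trace).re : ℝ) : ℂ) • (1 : Matrix (Fin d) (Fin d) ℂ)) := by
      push_cast
      simp only [add_smul]
      abel
    rw [hid]
    exact ((hpsdS.add hB).add hC).add (hsmul_psd _ (by linarith))
  have hpsdB : ((((1 - ((A + B + C).trace).re + (A.trace).re + (C.trace).re : ℝ)) : ℂ) • 1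
      - B).PosSemidef := by
    have hid : ((((1 - ((A + B + C).trace).re + (A.trace).re + (C.trace).re : ℝ)) : ℂ) • 1 - B)
        = (((((1 - ((A + B + C).trace).re : ℝ)) : ℂ) • 1 - (A + B + C)) + A + C)
          + ((((A.trace).re + (C.trace).re : ℝ) : ℂ) • (1 : Matrix (Fin d) (Fin d) ℂ)) := by
      push_cast
      simp only [add_smul]
      abel
    rw [hid]
    exact ((hpsdS.add hA).add hC).add (hsmul_psd _ (by linarith))
  have hpsdC : ((((1 - ((A + B + C).trace).re + (A.trace).re + (B.trace).re : ℝ)) : ℂ) • 1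
      - C).PosSemidef := by
    have hid : ((((1 - ((A + B + C).trace).re + (A.trace).re + (B.trace).re : ℝ)) : ℂ) • 1 - C)
        = (((((1 - ((A + B + C).trace).re : ℝ)) : ℂ) • 1 - (A + B + C)) + A + B)
          + ((((A.trace).re + (B.trace).re : ℝ) : ℂ) • (1 : Matrix (Fin d) (Fin d) ℂ)) := by
      push_cast
      simp only [add_smul]
      abel
    rw [hid]
    exact ((hpsdS.add hA).add hB).add (hsmul_psd _ (by linarith))
  -- the one-body λmax values
  have hredA : lmaxM (redA (redABC (purif hA hB hC)))
      = 1 - ((A + B + C).trace).re + (B.trace).re + (C.trace).re := by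
    rw [Helper.redA_purif hA hB hC ht0]
    exact Helper.lmaxM_ext1 hA.1 hpsdA
  have hredB : lmaxM (redB (redABC (purif hA hB hC)))
      = 1 - ((A + B + C).trace).re + (A.trace).re + (C.trace).re := by
    rw [Helper.redB_purif hA hB hC ht0]
    exact Helper.lmaxM_ext1 hB.1 hpsdB
  have hredC : lmaxM (redC (redABC (purif hA hB hC)))
      = 1 - ((A + B + C).trace).re + (A.trace).re + (B.trace).re := by
    rw [Helper.redC_purif hA hB hC ht0]
    exact Helper.lmaxM_ext1 hC.1 hpsdC
  -- λmax of the full reduced state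
  have hHρ : (redABC (purif hA hB hC)).IsHermitian := by
    rw [Helper.redABC_eq_mul hA hB hC]
    exact Matrix.isHermitian_mul_conjTranspose_self _
  have hρ : lmaxM (redABC (purif hA hB hC)) = 1 - ((A + B + C).trace).re := by
    refine le_antisymm ?_ ?_
    · rw [Helper.redABC_eq_mul hA hB hC]
      refine Helper.lmaxM_mul_conjTranspose_le _ ht0 ?_
      rw [Helper.conjTranspose_mul_pmat hA hB hC ht0, Helper.smul_one_sub_ext1]
      exact Helper.ext1_posSemidef le_rfl hpsdS
    · refine Helper.le_lmaxM_of_eigenvector hHρ ?_ (Helper.redABC_mulVec_single hA hB hC ht0)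
      intro h0
      simpa using congrFun h0 (0, 0, 0)
  constructor
  · rw [Helper.redABC_eq_mul hA hB hC]
    calc (Helper.pmat hA hB hC * (Helper.pmat hA hB hC)ᴴ).rank
        ≤ (Helper.pmat hA hB hC).rank := Matrix.rank_mul_le_left _ _
      _ ≤ Fintype.card (Fin (d + 1)) := Matrix.rank_le_card_width _
      _ = d + 1 := by simp
  · rw [hredA, hredB, hredC, hρ]
    have htr : ((A + B + C).trace).re = (A.trace).re + (B.trace).re + (C.trace).re := by
      simp [Matrix.trace_add]
    linarith
end
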